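/- Let C be a category with finite products such that the category Ab(C) of abelian group objects in C has coequalizers and the forgetful functor Ab(C) → C has a left adjoint. Then for any two objects A, A' of Ab(C), a tensor product A ⊗ A' exists in Ab(C), i.e. an object corepresenting the functor sending B to the set of bilinear morphisms A × A' → B. -/

import Mathlib

open CategoryTheory Limits

universe v u

/-- An abelian group object in a category `C`: an object `A` together with a lift of the
Yoneda functor `Hom_C(-, A)` to abelian groups, i.e. a natural abelian group structure on
all hom-sets into `A`. -/
structure AbObj (C : Type u) [Category.{v} C] : Type max u v where
  X : C
  str : ∀ Y : C, AddCommGroup (Y ⟶ X)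
  comp_add : ∀ {Y Z : C} (f : Z ⟶ Y) (g h : Y ⟶ X),
    letI := str Y
    letI := str Z
    f ≫ (g + h) = f ≫ g + f ≫ h

variable {C : Type u} [Category.{v} C]

/-- Morphisms of abelian group objects: morphisms of `C` inducing additive maps on
hom-sets. -/
@[ext]
structure AbHom (A B : AbObj C) : Type v where
  hom : A.X ⟶ B.X
  add_comp : ∀ {Y : C} (g h : Y ⟶ A.X),
    letI := A.str Y
    letI := B.str Y
    (g + h) ≫ hom = g ≫ hom + h ≫ hom

instance : Category (AbObj C) where
  Hom := AbHom
  id A := ⟨𝟙 A.X, by intro Y g h; simp⟩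
  comp f g := ⟨f.hom ≫ g.hom, by
    intro Y a b
    rw [← Category.assoc, f.add_comp, g.add_comp, Category.assoc, Category.assoc]⟩

@[ext]
lemma AbObj.hom_ext {A B : AbObj C} (f g : A ⟶ B) (h : f.hom = g.hom) : f = g :=
  AbHom.ext h

/-- The forgetful functor from abelian group objects of `C` to `C`. -/
def forgetAb (C : Type u) [Category.{v} C] : AbObj C ⥤ C where
  obj A := A.X
  map f := f.hom

/-- A morphism `A × A' ⟶ B` is bilinear if the induced natural transformation
`Hom(-, A) × Hom(-, A') → Hom(-, B)` is bilinear (additive in each variable). -/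
def IsBilinearMor [HasBinaryProducts C] (A A' B : AbObj C) (b : A.X ⨯ A'.X ⟶ B.X) : Prop :=
  (∀ (Y : C) (f₁ f₂ : Y ⟶ A.X) (g : Y ⟶ A'.X),
      letI := A.str Y
      letI := B.str Y
      prod.lift (f₁ + f₂) g ≫ b = prod.lift f₁ g ≫ b + prod.lift f₂ g ≫ b) ∧
  (∀ (Y : C) (f : Y ⟶ A.X) (g₁ g₂ : Y ⟶ A'.X),
      letI := A'.str Y
      letI := B.str Y
      prod.lift f (g₁ + g₂) ≫ b = prod.lift f g₁ ≫ b + prod.lift f g₂ ≫ b)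

section Aux

/-- Pointwise sum of two morphisms of abelian group objects. -/
def addHom {X B : AbObj C} (φ ψ : X ⟶ B) : X ⟶ B where
  hom := letI := B.str X.X; AbHom.hom φ + AbHom.hom ψ
  add_comp := by
    intro Y g h
    letI := X.str Y
    letI := B.str Y
    rw [B.comp_add, B.comp_add, B.comp_add, φ.add_comp, ψ.add_comp]
    abel

lemma addHom_comp {X B B' : AbObj C} (φ ψ : X ⟶ B) (χ : B ⟶ B') :
    addHom φ ψ ≫ χ = addHom (φ ≫ χ) (ψ ≫ χ) := by
  apply AbObj.hom_ext
  exact χ.add_comp φ.hom ψ.hom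

variable {F : C ⥤ AbObj C}

/-- Transpose of a morphism out of a free abelian group object. -/
def tr (adj : F ⊣ forgetAb C) {W : C} {B : AbObj C} (φ : F.obj W ⟶ B) : W ⟶ B.X :=
  adj.unit.app W ≫ φ.hom

lemma tr_injective (adj : F ⊣ forgetAb C) {W : C} {B : AbObj C} :
    Function.Injective (tr adj : (F.obj W ⟶ B) → (W ⟶ B.X)) := by
  intro φ ψ h
  apply (adj.homEquiv W B).injective
  rw [Adjunction.homEquiv_unit, Adjunction.homEquiv_unit]
  exact h

lemma tr_natural (adj : F ⊣ forgetAb C) {W P : C} {B : AbObj C} (u : W ⟶ P)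
    (φ : F.obj P ⟶ B) : tr adj (F.map u ≫ φ) = u ≫ tr adj φ := by
  show adj.unit.app W ≫ (forgetAb C).map (F.map u) ≫ φ.hom = u ≫ adj.unit.app P ≫ φ.hom
  exact ((Category.assoc _ _ _).symm.trans (congrArg (fun x => x ≫ φ.hom) (adj.unit.naturality u).symm)).trans (Category.assoc _ _ _)

lemma tr_addHom (adj : F ⊣ forgetAb C) {W : C} {B : AbObj C} (φ ψ : F.obj W ⟶ B) :
    tr adj (addHom φ ψ) = (letI := B.str W; tr adj φ + tr adj ψ) := by
  letI := B.str W
  exact B.comp_add _ _ _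

end Aux

/-- **Goerss.** If `C` has finite products, `Ab(C)` has coequalizers, and the
forgetful functor `Ab(C) → C` has a left adjoint, then any two abelian group objects
`A`, `A'` admit a tensor product: an object `A ⊗ A'` of `Ab(C)` together with a universal
bilinear morphism `A × A' ⟶ A ⊗ A'`. -/
theorem abObj_tensor_exists (C : Type u) [Category.{v} C] [HasFiniteProducts C]
    [HasCoequalizers (AbObj C)] [(forgetAb C).IsRightAdjoint]
    (A A' : AbObj C) :
    ∃ (T : AbObj C) (a : A.X ⨯ A'.X ⟶ T.X), IsBilinearMor A A' T a ∧
      ∀ (B : AbObj C) (b : A.X ⨯ A'.X ⟶ B.X), IsBilinearMor A A' B b →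
        ∃! f : T ⟶ B, a ≫ f.hom = b := by
  let F := (forgetAb C).leftAdjoint
  let adj : F ⊣ forgetAb C := Adjunction.ofIsRightAdjoint (forgetAb C)
  let P : C := A.X ⨯ A'.X
  let W₁ : C := (A.X ⨯ A.X) ⨯ A'.X
  let W₂ : C := A.X ⨯ (A'.X ⨯ A'.X)
  let u₁ : W₁ ⟶ P :=
    prod.lift (letI := A.str W₁; prod.fst ≫ prod.fst + prod.fst ≫ prod.snd) prod.snd
  let v₁ : W₁ ⟶ P := prod.lift (prod.fst ≫ prod.fst) prod.snd
  let w₁ : W₁ ⟶ P := prod.lift (prod.fst ≫ prod.snd) prod.snd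
  let u₂ : W₂ ⟶ P :=
    prod.lift prod.fst (letI := A'.str W₂; prod.snd ≫ prod.fst + prod.snd ≫ prod.snd)
  let v₂ : W₂ ⟶ P := prod.lift prod.fst (prod.snd ≫ prod.fst)
  let w₂ : W₂ ⟶ P := prod.lift prod.fst (prod.snd ≫ prod.snd)
  -- relating the two Ab(C)-level relations to C-level relations
  have eq1 : ∀ (B : AbObj C) (φ : F.obj P ⟶ B),
      (F.map u₁ ≫ φ = addHom (F.map v₁) (F.map w₁) ≫ φ) ↔
      (letI := B.str W₁; u₁ ≫ tr adj φ = v₁ ≫ tr adj φ + w₁ ≫ tr adj φ) := by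
    intro B φ
    letI := B.str W₁
    constructor
    · intro h
      have := congrArg (tr adj) h
      rwa [tr_natural, addHom_comp, tr_addHom, tr_natural, tr_natural] at this
    · intro h
      apply tr_injective adj
      rw [tr_natural, addHom_comp, tr_addHom, tr_natural, tr_natural]
      exact h
  have eq2 : ∀ (B : AbObj C) (φ : F.obj P ⟶ B),
      (F.map u₂ ≫ φ = addHom (F.map v₂) (F.map w₂) ≫ φ) ↔
      (letI := B.str W₂; u₂ ≫ tr adj φ = v₂ ≫ tr adj φ + w₂ ≫ tr adj φ) := by
    intro B φ
    letI := B.str W₂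
    constructor
    · intro h
      have := congrArg (tr adj) h
      rwa [tr_natural, addHom_comp, tr_addHom, tr_natural, tr_natural] at this
    · intro h
      apply tr_injective adj
      rw [tr_natural, addHom_comp, tr_addHom, tr_natural, tr_natural]
      exact h
  -- the C-level relations are equivalent to bilinearity
  have bil1 : ∀ (B : AbObj C) (b : P ⟶ B.X),
      (∀ (Y : C) (f₁ f₂ : Y ⟶ A.X) (g : Y ⟶ A'.X),
        letI := A.str Y
        letI := B.str Y
        prod.lift (f₁ + f₂) g ≫ b = prod.lift f₁ g ≫ b + prod.lift f₂ g ≫ b) ↔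
      (letI := B.str W₁; u₁ ≫ b = v₁ ≫ b + w₁ ≫ b) := by
    intro B b
    constructor
    · intro h
      exact h W₁ (prod.fst ≫ prod.fst) (prod.fst ≫ prod.snd) prod.snd
    · intro h Y f₁ f₂ g
      letI := A.str Y
      letI := B.str Y
      letI := B.str W₁
      set k : Y ⟶ W₁ := prod.lift (prod.lift f₁ f₂) g with hk
      have hu : k ≫ u₁ = prod.lift (f₁ + f₂) g := by
        show k ≫ prod.lift _ _ = _
        rw [prod.comp_lift, A.comp_add]
        rw [hk, prod.lift_fst_assoc, prod.lift_fst_assoc, prod.lift_fst, prod.lift_snd, prod.lift_snd]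
      have hv : k ≫ v₁ = prod.lift f₁ g := by
        show k ≫ prod.lift _ _ = _
        rw [prod.comp_lift]
        rw [hk, prod.lift_fst_assoc, prod.lift_fst, prod.lift_snd]
      have hw : k ≫ w₁ = prod.lift f₂ g := by
        show k ≫ prod.lift _ _ = _
        rw [prod.comp_lift]
        rw [hk, prod.lift_fst_assoc, prod.lift_snd, prod.lift_snd]
      calc prod.lift (f₁ + f₂) g ≫ b = k ≫ u₁ ≫ b := by rw [← Category.assoc, hu]
        _ = k ≫ (v₁ ≫ b + w₁ ≫ b) := by rw [h]
        _ = k ≫ (v₁ ≫ b) + k ≫ (w₁ ≫ b) := B.comp_add _ _ _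
        _ = prod.lift f₁ g ≫ b + prod.lift f₂ g ≫ b := by
            rw [← Category.assoc, ← Category.assoc, hv, hw]
  have bil2 : ∀ (B : AbObj C) (b : P ⟶ B.X),
      (∀ (Y : C) (f : Y ⟶ A.X) (g₁ g₂ : Y ⟶ A'.X),
        letI := A'.str Y
        letI := B.str Y
        prod.lift f (g₁ + g₂) ≫ b = prod.lift f g₁ ≫ b + prod.lift f g₂ ≫ b) ↔
      (letI := B.str W₂; u₂ ≫ b = v₂ ≫ b + w₂ ≫ b) := by
    intro B b
    constructor
    · intro h
      exact h W₂ prod.fst (prod.snd ≫ prod.fst) (prod.snd ≫ prod.snd)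
    · intro h Y f g₁ g₂
      letI := A'.str Y
      letI := B.str Y
      letI := B.str W₂
      set k : Y ⟶ W₂ := prod.lift f (prod.lift g₁ g₂) with hk
      have hu : k ≫ u₂ = prod.lift f (g₁ + g₂) := by
        show k ≫ prod.lift _ _ = _
        rw [prod.comp_lift, A'.comp_add]
        rw [hk, prod.lift_fst, prod.lift_snd_assoc, prod.lift_snd_assoc, prod.lift_fst, prod.lift_snd]
      have hv : k ≫ v₂ = prod.lift f g₁ := by
        show k ≫ prod.lift _ _ = _
        rw [prod.comp_lift]
        rw [hk, prod.lift_fst, prod.lift_snd_assoc, prod.lift_fst]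
      have hw : k ≫ w₂ = prod.lift f g₂ := by
        show k ≫ prod.lift _ _ = _
        rw [prod.comp_lift]
        rw [hk, prod.lift_fst, prod.lift_snd_assoc, prod.lift_snd]
      calc prod.lift f (g₁ + g₂) ≫ b = k ≫ u₂ ≫ b := by rw [← Category.assoc, hu]
        _ = k ≫ (v₂ ≫ b + w₂ ≫ b) := by rw [h]
        _ = k ≫ (v₂ ≫ b) + k ≫ (w₂ ≫ b) := B.comp_add _ _ _
        _ = prod.lift f g₁ ≫ b + prod.lift f g₂ ≫ b := by
            rw [← Category.assoc, ← Category.assoc, hv, hw]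
  -- the construction: two successive coequalizers
  let r₁ : F.obj W₁ ⟶ F.obj P := F.map u₁
  let s₁ : F.obj W₁ ⟶ F.obj P := addHom (F.map v₁) (F.map w₁)
  let r₂ : F.obj W₂ ⟶ F.obj P := F.map u₂
  let s₂ : F.obj W₂ ⟶ F.obj P := addHom (F.map v₂) (F.map w₂)
  let T₁ : AbObj C := coequalizer r₁ s₁
  let q₁ : F.obj P ⟶ T₁ := coequalizer.π r₁ s₁
  let T : AbObj C := coequalizer (r₂ ≫ q₁) (s₂ ≫ q₁)
  let q₂ : T₁ ⟶ T := coequalizer.π (r₂ ≫ q₁) (s₂ ≫ q₁)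
  let p : F.obj P ⟶ T := q₁ ≫ q₂
  let a : P ⟶ T.X := tr adj p
  have hrel1 : r₁ ≫ p = s₁ ≫ p := by
    show r₁ ≫ q₁ ≫ q₂ = s₁ ≫ q₁ ≫ q₂
    rw [← Category.assoc, coequalizer.condition r₁ s₁, Category.assoc]
  have hrel2 : r₂ ≫ p = s₂ ≫ p := by
    show r₂ ≫ q₁ ≫ q₂ = s₂ ≫ q₁ ≫ q₂
    rw [← Category.assoc, ← Category.assoc]
    exact coequalizer.condition (r₂ ≫ q₁) (s₂ ≫ q₁)
  refine ⟨T, a, ⟨(bil1 T a).mpr ((eq1 T p).mp hrel1), (bil2 T a).mpr ((eq2 T p).mp hrel2)⟩, ?_⟩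
  intro B b hb
  let φ : F.obj P ⟶ B := (adj.homEquiv P B).symm b
  have htr : tr adj φ = b := by
    have h := (adj.homEquiv P B).apply_symm_apply b
    rw [Adjunction.homEquiv_unit] at h
    exact h
  have h1 : r₁ ≫ φ = s₁ ≫ φ := by
    apply (eq1 B φ).mpr
    rw [htr]
    exact (bil1 B b).mp hb.1
  have h2 : r₂ ≫ φ = s₂ ≫ φ := by
    apply (eq2 B φ).mpr
    rw [htr]
    exact (bil2 B b).mp hb.2
  let g₁ : T₁ ⟶ B := coequalizer.desc φ h1
  have hg₁ : q₁ ≫ g₁ = φ := coequalizer.π_desc φ h1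
  have h2' : (r₂ ≫ q₁) ≫ g₁ = (s₂ ≫ q₁) ≫ g₁ := by
    rw [Category.assoc, Category.assoc, hg₁]
    exact h2
  let f : T ⟶ B := coequalizer.desc g₁ h2'
  have hf : q₂ ≫ f = g₁ := coequalizer.π_desc g₁ h2'
  have hpf : p ≫ f = φ := by
    show (q₁ ≫ q₂) ≫ f = φ
    rw [Category.assoc, hf, hg₁]
  have key : ∀ (f' : T ⟶ B), a ≫ f'.hom = b ↔ p ≫ f' = φ := by
    intro f'
    constructor
    · intro hf'
      apply tr_injective adj
      rw [htr]
      show adj.unit.app P ≫ (p ≫ f').hom = b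
      show adj.unit.app P ≫ p.hom ≫ f'.hom = b
      exact (Category.assoc _ _ _).symm.trans hf'
    · intro hf'
      have : tr adj (p ≫ f') = b := by rw [hf', htr]
      show (adj.unit.app P ≫ p.hom) ≫ f'.hom = b
      exact (Category.assoc _ _ _).trans this
  refine ⟨f, (key f).mpr hpf, ?_⟩
  intro f' hf'
  have hpp : p ≫ f' = p ≫ f := by rw [(key f').mp hf', hpf]
  have hq : q₁ ≫ (q₂ ≫ f') = q₁ ≫ (q₂ ≫ f) := by
    rw [← Category.assoc, ← Category.assoc]
    exact hpp
  exact (cancel_epi q₂).mp ((cancel_epi q₁).mp hq)
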